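/- Let (φ,Φ) be an isomorphism of 2-term L∞-algebras from L^{g,U,ρ,J̃} to L^{g',U',ρ',J̃'}. Define τ : g → g' by letting τ(x) be the g'-component of φ₀(x⊕0) ∈ g'⊕U', and define t : V → V' by letting t(v) be the V'-component of φ₁(v⊕0) ∈ V'⊕U'. Then τ is a Lie algebra isomorphism from (g,[·,·]_g) to (g',[·,·]_{g'}), t is a linear isomorphism, and t(ρ(y)(v)) = ρ'(τ(y))(t(v)) for all y ∈ g and v ∈ V; that is, t is an isomorphism of representations from (ρ,V) to (ρ'∘τ, V'). -/

import Mathlib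

open Function

/-- The data `(d, b0, b1, J)` on the graded vector space `L0 ⊕ L1` forms a 2-term
L∞-algebra.  Here `b0` is the bracket `L0 × L0 → L0`, `b1` is the bracket
`L0 × L1 → L1` (with the convention `[v,x] := -[x,v] = - b1 x v` for `v : L1`, `x : L0`),
and `J` is the Jacobiator. -/
structure IsTwoTerm (k : Type*) [Field k]
    (L0 : Type*) [AddCommGroup L0] [Module k L0]
    (L1 : Type*) [AddCommGroup L1] [Module k L1]
    (d : L1 → L0) (b0 : L0 → L0 → L0) (b1 : L0 → L1 → L1)
    (J : L0 → L0 → L0 → L1) : Prop where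
  d_lin : IsLinearMap k d
  b0_lin_left : ∀ y, IsLinearMap k fun x => b0 x y
  b0_lin_right : ∀ x, IsLinearMap k fun y => b0 x y
  b0_antisymm : ∀ x y, b0 x y = - b0 y x
  b1_lin_left : ∀ v, IsLinearMap k fun x => b1 x v
  b1_lin_right : ∀ x, IsLinearMap k fun v => b1 x v
  J_lin₁ : ∀ y z, IsLinearMap k fun x => J x y z
  J_lin₂ : ∀ x z, IsLinearMap k fun y => J x y z
  J_lin₃ : ∀ x y, IsLinearMap k fun z => J x y z
  J_alt₁ : ∀ x z, J x x z = 0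
  J_alt₂ : ∀ x y, J x y y = 0
  ident₁ : ∀ x v, d (b1 x v) = b0 x (d v)
  ident₂ : ∀ u v, b1 (d u) v = - b1 (d v) u
  ident₃ : ∀ x y z, d (J x y z) = b0 x (b0 y z) - b0 (b0 x y) z - b0 y (b0 x z)
  ident₄ : ∀ v y z, J (d v) y z = - b1 (b0 y z) v - b1 z (b1 y v) + b1 y (b1 z v)
  ident₅ : ∀ x₁ x₂ x₃ x₄,
    b1 x₁ (J x₂ x₃ x₄) - b1 x₂ (J x₁ x₃ x₄) + b1 x₃ (J x₁ x₂ x₄) - b1 x₄ (J x₁ x₂ x₃)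
      - (J (b0 x₁ x₂) x₃ x₄ - J (b0 x₁ x₃) x₂ x₄ + J (b0 x₁ x₄) x₂ x₃
        + J (b0 x₂ x₃) x₁ x₄ - J (b0 x₂ x₄) x₁ x₃ + J (b0 x₃ x₄) x₁ x₂) = 0

/-- `(φ0, φ1, Φ)` is a morphism of 2-term L∞-algebras from `(L0 ⊕ L1, d, b0, b1, J)`
to `(M0 ⊕ M1, d', b0', b1', J')`.  `Φ` is a linear map on `L0 ∧ L0`, encoded as an
antisymmetric bilinear map. -/
structure IsMorphism (k : Type*) [Field k]
    (L0 : Type*) [AddCommGroup L0] [Module k L0]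
    (L1 : Type*) [AddCommGroup L1] [Module k L1]
    (M0 : Type*) [AddCommGroup M0] [Module k M0]
    (M1 : Type*) [AddCommGroup M1] [Module k M1]
    (d : L1 → L0) (b0 : L0 → L0 → L0) (b1 : L0 → L1 → L1) (J : L0 → L0 → L0 → L1)
    (d' : M1 → M0) (b0' : M0 → M0 → M0) (b1' : M0 → M1 → M1) (J' : M0 → M0 → M0 → M1)
    (φ0 : L0 → M0) (φ1 : L1 → M1) (Φ : L0 → L0 → M1) : Prop where
  φ0_lin : IsLinearMap k φ0
  φ1_lin : IsLinearMap k φ1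
  Φ_lin_left : ∀ y, IsLinearMap k fun x => Φ x y
  Φ_lin_right : ∀ x, IsLinearMap k fun y => Φ x y
  Φ_alt : ∀ x, Φ x x = 0
  compat_d : ∀ v, φ0 (d v) = d' (φ1 v)
  compat_b0 : ∀ x y, d' (Φ x y) = φ0 (b0 x y) - b0' (φ0 x) (φ0 y)
  compat_b1 : ∀ v y, Φ (d v) y = - φ1 (b1 y v) + b1' (φ0 y) (φ1 v)
  compat_J : ∀ x₁ x₂ x₃,
    φ1 (J x₁ x₂ x₃) - J' (φ0 x₁) (φ0 x₂) (φ0 x₃)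
      = b1' (φ0 x₁) (Φ x₂ x₃) - b1' (φ0 x₂) (Φ x₁ x₃) + b1' (φ0 x₃) (Φ x₁ x₂)
        + Φ x₁ (b0 x₂ x₃) - Φ x₂ (b0 x₁ x₃) + Φ x₃ (b0 x₁ x₂)

/-- part of Theorem 12 of the paper, "⇒" direction: given an isomorphism
`(φ,Φ)` of 2-term L∞-algebras from `L^{g,U,ρ,Jt}` to `L^{g',U',ρ',Jt'}`, the maps
`τ(x) := (φ0(x,0)).1` (the `g'`-component) and `t(v) := (φ1(v,0)).1` (the `V'`-component)
are respectively a Lie algebra isomorphism `g → g'` and an isomorphism of representations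
`(ρ,V) → (ρ' ∘ τ, V')`. -/
theorem stmt9 (k : Type*) [Field k]
    (g : Type*) [LieRing g] [LieAlgebra k g]
    (g' : Type*) [LieRing g'] [LieAlgebra k g']
    (U : Type*) [AddCommGroup U] [Module k U]
    (U' : Type*) [AddCommGroup U'] [Module k U']
    (V : Type*) [AddCommGroup V] [Module k V]
    (V' : Type*) [AddCommGroup V'] [Module k V']
    (ρ : g → V → V)
    (hρ_lin_left : ∀ v, IsLinearMap k fun x => ρ x v)
    (hρ_lin_right : ∀ x, IsLinearMap k fun v => ρ x v)
    (hρ_bracket : ∀ x y v, ρ ⁅x, y⁆ v = ρ x (ρ y v) - ρ y (ρ x v))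
    (ρ' : g' → V' → V')
    (hρ'_lin_left : ∀ v, IsLinearMap k fun x => ρ' x v)
    (hρ'_lin_right : ∀ x, IsLinearMap k fun v => ρ' x v)
    (hρ'_bracket : ∀ x y v, ρ' ⁅x, y⁆ v = ρ' x (ρ' y v) - ρ' y (ρ' x v))
    (Jt : g → g → g → V)
    (hJt_lin₁ : ∀ y z, IsLinearMap k fun x => Jt x y z)
    (hJt_lin₂ : ∀ x z, IsLinearMap k fun y => Jt x y z)
    (hJt_lin₃ : ∀ x y, IsLinearMap k fun z => Jt x y z)
    (hJt_alt₁ : ∀ x z, Jt x x z = 0)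
    (hJt_alt₂ : ∀ x y, Jt x y y = 0)
    (hJt_cocycle : ∀ x₁ x₂ x₃ x₄,
      ρ x₁ (Jt x₂ x₃ x₄) - ρ x₂ (Jt x₁ x₃ x₄) + ρ x₃ (Jt x₁ x₂ x₄) - ρ x₄ (Jt x₁ x₂ x₃)
        - (Jt ⁅x₁, x₂⁆ x₃ x₄ - Jt ⁅x₁, x₃⁆ x₂ x₄ + Jt ⁅x₁, x₄⁆ x₂ x₃
          + Jt ⁅x₂, x₃⁆ x₁ x₄ - Jt ⁅x₂, x₄⁆ x₁ x₃ + Jt ⁅x₃, x₄⁆ x₁ x₂) = 0)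
    (Jt' : g' → g' → g' → V')
    (hJt'_lin₁ : ∀ y z, IsLinearMap k fun x => Jt' x y z)
    (hJt'_lin₂ : ∀ x z, IsLinearMap k fun y => Jt' x y z)
    (hJt'_lin₃ : ∀ x y, IsLinearMap k fun z => Jt' x y z)
    (hJt'_alt₁ : ∀ x z, Jt' x x z = 0)
    (hJt'_alt₂ : ∀ x y, Jt' x y y = 0)
    (hJt'_cocycle : ∀ x₁ x₂ x₃ x₄,
      ρ' x₁ (Jt' x₂ x₃ x₄) - ρ' x₂ (Jt' x₁ x₃ x₄) + ρ' x₃ (Jt' x₁ x₂ x₄)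
          - ρ' x₄ (Jt' x₁ x₂ x₃)
        - (Jt' ⁅x₁, x₂⁆ x₃ x₄ - Jt' ⁅x₁, x₃⁆ x₂ x₄ + Jt' ⁅x₁, x₄⁆ x₂ x₃
          + Jt' ⁅x₂, x₃⁆ x₁ x₄ - Jt' ⁅x₂, x₄⁆ x₁ x₃ + Jt' ⁅x₃, x₄⁆ x₁ x₂) = 0)
    (φ0 : g × U → g' × U') (φ1 : V × U → V' × U') (Φ : g × U → g × U → V' × U')
    (hmor : IsMorphism k (g × U) (V × U) (g' × U') (V' × U')
      (fun w => ((0 : g), w.2))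
      (fun x y => (⁅x.1, y.1⁆, (0 : U)))
      (fun x v => (ρ x.1 v.1, (0 : U)))
      (fun x y z => (Jt x.1 y.1 z.1, (0 : U)))
      (fun w => ((0 : g'), w.2))
      (fun x y => (⁅x.1, y.1⁆, (0 : U')))
      (fun x v => (ρ' x.1 v.1, (0 : U')))
      (fun x y z => (Jt' x.1 y.1 z.1, (0 : U')))
      φ0 φ1 Φ)
    (hφ0_bij : Function.Bijective φ0) (hφ1_bij : Function.Bijective φ1)
    :
    IsLinearMap k (fun x : g => (φ0 (x, 0)).1) ∧
    Function.Bijective (fun x : g => (φ0 (x, 0)).1) ∧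
    (∀ x y : g, (φ0 (⁅x, y⁆, 0)).1 = ⁅(φ0 (x, 0)).1, (φ0 (y, 0)).1⁆) ∧
    IsLinearMap k (fun v : V => (φ1 (v, 0)).1) ∧
    Function.Bijective (fun v : V => (φ1 (v, 0)).1) ∧
    (∀ (y : g) (v : V),
      (φ1 (ρ y v, 0)).1 = ρ' (φ0 (y, 0)).1 (φ1 (v, 0)).1) := by
  obtain ⟨hφ0lin, hφ1lin, hΦll, hΦlr, hΦalt, hcd, hcb0, hcb1, hcJ⟩ := hmor
  -- φ0 maps (0,u) to (0, something)
  have hφ0U : ∀ u : U, φ0 ((0:g), u) = ((0:g'), (φ1 ((0:V), u)).2) := by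
    intro u
    simpa using hcd ((0:V), u)
  -- second component of φ1 (v,0) vanishes
  have hφ1ker : ∀ v : V, (φ1 (v, (0:U))).2 = 0 := by
    intro v
    have h := hcd ((v, 0) : V × U)
    simp only at h
    rw [show ((0:g), (0:U)) = (0 : g × U) from rfl, hφ0lin.map_zero] at h
    have := congrArg Prod.snd h
    simpa using this.symm
  -- every (0,u') is in the image of 0 × U
  have hUsurj : ∀ u' : U', ∃ u : U, φ0 ((0:g), u) = ((0:g'), u') := by
    intro u'
    obtain ⟨w, hw⟩ := hφ1_bij.2 ((0:V'), u')
    refine ⟨w.2, ?_⟩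
    have h := hcd w
    beta_reduce at h
    rw [hw] at h
    exact h
  have hmk_add : ∀ x y : g, ((x + y : g), (0:U)) = (x, (0:U)) + (y, (0:U)) := by
    intro x y; simp [Prod.ext_iff]
  have hmk_sub : ∀ x y : g, ((x - y : g), (0:U)) = (x, (0:U)) - (y, (0:U)) := by
    intro x y; simp [Prod.ext_iff]
  have hmk_smul : ∀ (c : k) (x : g), ((c • x : g), (0:U)) = c • (x, (0:U)) := by
    intro c x; simp [Prod.ext_iff]
  have hmk_add' : ∀ x y : V, ((x + y : V), (0:U)) = (x, (0:U)) + (y, (0:U)) := by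
    intro x y; simp [Prod.ext_iff]
  have hmk_sub' : ∀ x y : V, ((x - y : V), (0:U)) = (x, (0:U)) - (y, (0:U)) := by
    intro x y; simp [Prod.ext_iff]
  have hmk_smul' : ∀ (c : k) (x : V), ((c • x : V), (0:U)) = c • (x, (0:U)) := by
    intro c x; simp [Prod.ext_iff]
  refine ⟨?_, ⟨?_, ?_⟩, ?_, ?_, ⟨?_, ?_⟩, ?_⟩
  · -- τ linear
    constructor
    · intro x y; rw [hmk_add, hφ0lin.map_add]; rfl
    · intro c x; rw [hmk_smul, hφ0lin.map_smul]; rfl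
  · -- τ injective
    intro x y hxy
    simp only at hxy
    have hsub : (φ0 (x - y, (0:U))).1 = 0 := by
      rw [hmk_sub, hφ0lin.map_sub]
      simp [hxy]
    obtain ⟨u, hu⟩ := hUsurj (φ0 (x - y, (0:U))).2
    have heq : φ0 (x - y, (0:U)) = φ0 ((0:g), u) := by
      rw [hu]
      exact Prod.ext hsub rfl
    have := congrArg Prod.fst (hφ0_bij.1 heq)
    simp only at this
    exact sub_eq_zero.mp this
  · -- τ surjective
    intro x'
    obtain ⟨w, hw⟩ := hφ0_bij.2 ((x', (0:U')))
    refine ⟨w.1, ?_⟩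
    have hsplit : ((w.1 : g), (0:U)) = w - ((0:g), w.2) := by
      simp [Prod.ext_iff]
    simp only [hsplit, hφ0lin.map_sub, hw, hφ0U, Prod.fst_sub]
    simp
  · -- bracket
    intro x y
    have h := hcb0 ((x,(0:U))) ((y,(0:U)))
    have := congrArg Prod.fst h
    simp only [Prod.fst_sub] at this
    exact (sub_eq_zero.mp this.symm)
  · -- t linear
    constructor
    · intro x y; rw [hmk_add', hφ1lin.map_add]; rfl
    · intro c x; rw [hmk_smul', hφ1lin.map_smul]; rfl
  · -- t injective
    intro v w hvw
    simp only at hvw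
    have h1 : φ1 (v - w, (0:U)) = 0 := by
      have hfst : (φ1 (v - w, (0:U))).1 = 0 := by
        rw [hmk_sub', hφ1lin.map_sub]
        simp [hvw]
      have hsnd := hφ1ker (v - w)
      rw [Prod.ext_iff]
      exact ⟨hfst, hsnd⟩
    have := hφ1_bij.1 (h1.trans hφ1lin.map_zero.symm)
    have := congrArg Prod.fst this
    simp only at this
    exact sub_eq_zero.mp this
  · -- t surjective
    intro v'
    obtain ⟨w, hw⟩ := hφ1_bij.2 ((v', (0:U')))
    have h := hcd w
    simp only [hw] at h
    have h0 : φ0 ((0:g), w.2) = φ0 (0 : g × U) := by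
      rw [hφ0lin.map_zero]
      exact h.trans rfl
    have hw2 : w.2 = 0 := by
      have := hφ0_bij.1 h0
      exact congrArg Prod.snd this
    refine ⟨w.1, ?_⟩
    simp only
    rw [show ((w.1 : V), (0:U)) = w from by rw [← hw2]]
    rw [hw]
  · -- representation compatibility
    intro y v
    have h := hcb1 ((v, (0:U))) ((y, (0:U)))
    simp only at h
    rw [show ((0:g), (0:U)) = (0 : g × U) from rfl, (hΦll ((y,(0:U)))).map_zero] at h
    have h2 := congrArg Prod.fst h
    simp only [Prod.fst_zero, Prod.fst_add, Prod.fst_neg] at h2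
    exact neg_add_eq_zero.mp h2.symm
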